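/- No automorphism of order 4 of the Heawood graph setwise fixes a 12-cycle. -/

import Mathlib

/-- The Heawood graph `C₁₄` on vertex set `ZMod 14`: distinct vertices `i` and `j` are
adjacent iff `j = i ± 1`, or `i` is even and `j = i + 5`, or `i` is odd and `j = i - 5`
(LCF notation `[5, -5]⁷`). -/
def heawood : SimpleGraph (ZMod 14) where
  Adj i j := i ≠ j ∧ (j = i + 1 ∨ j = i - 1 ∨
    (i.val % 2 = 0 ∧ j = i + 5) ∨ (i.val % 2 = 1 ∧ j = i - 5))
  symm := by constructor; intro i j h; revert i j; decide
  loopless := by constructor; intro i h; revert i h; decide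

/-- The set of `n`-cycles of a graph `G`, each cycle recorded as its edge set (so that
cycles are counted as subgraphs, i.e. up to choice of starting vertex and direction). -/
def cycleEdgeSets {V : Type*} [DecidableEq V] (G : SimpleGraph V) (n : ℕ) :
    Set (Finset (Sym2 V)) :=
  {s | ∃ (v : V) (w : G.Walk v v), w.IsCycle ∧ w.length = n ∧ w.edges.toFinset = s}

instance : DecidableRel heawood.Adj := fun i j => by dsimp [heawood]; infer_instance

lemma heawood_card3 : ∀ x : ZMod 14,
    (Finset.univ.filter (fun y => heawood.Adj x y)).card = 3 := by decide

lemma heawood_parity : ∀ a b : ZMod 14, heawood.Adj a b →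
    ((a.val : ZMod 2)) ≠ ((b.val : ZMod 2)) := by decide

set_option maxHeartbeats 1600000 in
lemma heawood_no4 : ∀ a b c d : ZMod 14, heawood.Adj a b → heawood.Adj b c →
    heawood.Adj c d → heawood.Adj d a → a = c ∨ b = d := by decide

lemma heawood_deg4 : ∀ x a b c d : ZMod 14, heawood.Adj x a → heawood.Adj x b →
    heawood.Adj x c → heawood.Adj x d →
    a = b ∨ a = c ∨ a = d ∨ b = c ∨ b = d ∨ c = d := by
  intro x a b c d ha hb hc hd
  by_contra hcon
  push_neg at hcon
  obtain ⟨h1, h2, h3, h4, h5, h6⟩ := hcon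
  have hsub : ({a, b, c, d} : Finset (ZMod 14)) ⊆
      Finset.univ.filter (fun y => heawood.Adj x y) := by
    intro y hy
    simp only [Finset.mem_insert, Finset.mem_singleton] at hy
    rcases hy with rfl | rfl | rfl | rfl <;> simp [ha, hb, hc, hd]
  have hcard : ({a, b, c, d} : Finset (ZMod 14)).card = 4 := by
    rw [Finset.card_insert_of_notMem (by simp [h1, h2, h3]),
      Finset.card_insert_of_notMem (by simp [h4, h5]),
      Finset.card_insert_of_notMem (by simp [h6]), Finset.card_singleton]
  have := Finset.card_le_card hsub
  rw [hcard, heawood_card3 x] at this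
  omega

lemma heawood_three : ∀ x : ZMod 14, ∃ a b c : ZMod 14, heawood.Adj x a ∧
    heawood.Adj x b ∧ heawood.Adj x c ∧ a ≠ b ∧ a ≠ c ∧ b ≠ c := by
  intro x
  obtain ⟨a, b, c, hab, hac, hbc, he⟩ := Finset.card_eq_three.mp (heawood_card3 x)
  have hmem : ∀ y ∈ ({a, b, c} : Finset (ZMod 14)), heawood.Adj x y := by
    intro y hy
    rw [← he] at hy
    exact (Finset.mem_filter.mp hy).2
  exact ⟨a, b, c, hmem a (by simp), hmem b (by simp), hmem c (by simp), hab, hac, hbc⟩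

lemma support_getElem_eq_getVert {V : Type*} {G : SimpleGraph V} {u v : V} (p : G.Walk u v) :
    ∀ (i : ℕ) (h : i < p.support.length), p.support[i] = p.getVert i := by
  induction p with
  | nil => intro i h; simp [SimpleGraph.Walk.support_nil] at h; subst h;
           simp [SimpleGraph.Walk.support_nil]
  | cons ha q ih =>
    intro i h
    cases i with
    | zero => simp [SimpleGraph.Walk.support_cons]
    | succ n =>
      simp only [SimpleGraph.Walk.support_cons, List.getElem_cons_succ,
        SimpleGraph.Walk.getVert_cons_succ]
      exact ih n (by simpa [SimpleGraph.Walk.support_cons] using h)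

lemma mk_getVert_mem_edges {V : Type*} {G : SimpleGraph V} {u v : V} (p : G.Walk u v) :
    ∀ (i : ℕ), i < p.length → s(p.getVert i, p.getVert (i + 1)) ∈ p.edges := by
  induction p with
  | nil => intro i h; simp at h
  | @cons a b c ha q ih =>
    intro i h
    cases i with
    | zero =>
      have h1 : (SimpleGraph.Walk.cons ha q).getVert (0 + 1) = b := by
        rw [SimpleGraph.Walk.getVert_cons_succ, SimpleGraph.Walk.getVert_zero]
      rw [SimpleGraph.Walk.getVert_zero, h1, SimpleGraph.Walk.edges_cons]
      exact List.mem_cons_self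
    | succ n =>
      simp only [SimpleGraph.Walk.getVert_cons_succ, SimpleGraph.Walk.edges_cons]
      right
      exact ih n (by simpa [SimpleGraph.Walk.length_cons] using h)

lemma stepConst {M : Type*} (g : ZMod 12 → M) (h : ∀ i, g (i + 1) = g i) : ∀ i, g i = g 0 := by
  have hn : ∀ n : ℕ, g (n : ZMod 12) = g 0 := by
    intro n
    induction n with
    | zero => simp
    | succ m ih => rw [Nat.cast_succ, h, ih]
  intro i
  have := hn i.val
  rwa [ZMod.natCast_zmod_val] at this

lemma pick3 {X : Type*} {a b c p q : X} (hab : a ≠ b) (hac : a ≠ c) (hbc : b ≠ c) :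
    (a ≠ p ∧ a ≠ q) ∨ (b ≠ p ∧ b ≠ q) ∨ (c ≠ p ∧ c ≠ q) := by
  by_cases h1 : a ≠ p ∧ a ≠ q
  · exact Or.inl h1
  by_cases h2 : b ≠ p ∧ b ≠ q
  · exact Or.inr (Or.inl h2)
  right; right
  rw [not_and_or, not_not, not_not] at h1 h2
  rcases h1 with rfl | rfl <;> rcases h2 with h2 | h2 <;>
    first
      | exact absurd h2 hab
      | (subst h2; constructor <;> (intro h; subst h; simp_all))

lemma odd_of_cast_ne : ∀ d : ZMod 12,
    (ZMod.castHom (by norm_num : (2:ℕ) ∣ 12) (ZMod 2)) d ≠ 0 →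
    d = 1 ∨ d = 3 ∨ d = 5 ∨ d = 7 ∨ d = 9 ∨ d = 11 := by decide

lemma four_torsion : ∀ c : ZMod 12, c + c + c + c = 0 →
    c = 0 ∨ c = 3 ∨ c = 6 ∨ c = 9 := by decide

/-- No automorphism of order 4 of the Heawood graph setwise fixes a 12-cycle. -/
theorem heawood_order_four_no_invariant_twelveCycle (α : heawood ≃g heawood)
    (hα : orderOf α = 4) :
    ∀ s ∈ cycleEdgeSets heawood 12, s.image (Sym2.map ⇑α) ≠ s := by
  rintro s ⟨v0, w, hcyc, hlen, rfl⟩ himg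
  -- the cyclic vertex function
  set l : ZMod 12 → ZMod 14 := fun i => w.getVert (i.val + 1) with hldef
  have hval1 : (1 : ZMod 12).val = 1 := rfl
  have hsucc : ∀ i : ZMod 12, i.val + 1 < 12 → (i + 1).val = i.val + 1 := by
    intro i h
    rw [ZMod.val_add_of_lt (by rw [hval1]; omega), hval1]
  have hsuplen : w.support.length = 13 := by
    rw [SimpleGraph.Walk.length_support, hlen]
  have htaillen : w.support.tail.length = 12 := by
    rw [List.length_tail, hsuplen]
  have hgv_tail : ∀ (k : ℕ) (h : k < 12), w.support.tail[k]'(by omega) = w.getVert (k + 1) := by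
    intro k h
    rw [List.getElem_tail]
    exact support_getElem_eq_getVert w (k + 1) (by omega)
  have hlinj : Function.Injective l := by
    intro i j hij
    have hi : i.val < 12 := ZMod.val_lt i
    have hj : j.val < 12 := ZMod.val_lt j
    have h1 : w.support.tail[i.val]'(by omega) = w.support.tail[j.val]'(by omega) := by
      rw [hgv_tail i.val hi, hgv_tail j.val hj]; exact hij
    have := (List.Nodup.getElem_inj_iff hcyc.support_nodup).mp h1
    exact ZMod.val_injective _ this
  have hgv12 : w.getVert 12 = v0 := by
    rw [← hlen]; exact SimpleGraph.Walk.getVert_length w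
  have hi11 : ∀ i : ZMod 12, i.val = 11 → i = 11 := by
    intro i h
    have := ZMod.natCast_zmod_val i
    rw [h] at this
    exact this.symm ▸ rfl
  have hadj : ∀ i : ZMod 12, heawood.Adj (l i) (l (i + 1)) := by
    intro i
    have hi : i.val < 12 := ZMod.val_lt i
    by_cases h : i.val + 1 < 12
    · have h2 : l (i + 1) = w.getVert (i.val + 1 + 1) := by
        show w.getVert ((i + 1).val + 1) = _
        rw [hsucc i h]
      rw [h2]
      exact w.adj_getVert_succ (by omega)
    · have h11 : i.val = 11 := by omega
      have hieq : i = 11 := hi11 i h11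
      have h1 : l i = v0 := by
        show w.getVert (i.val + 1) = v0
        rw [h11]; exact hgv12
      have h2 : l (i + 1) = w.getVert 1 := by
        show w.getVert ((i + 1).val + 1) = _
        rw [hieq, show (11 + 1 : ZMod 12) = 0 from by decide]
        rfl
      rw [h1, h2]
      have := w.adj_getVert_succ (show 0 < w.length by omega)
      rwa [SimpleGraph.Walk.getVert_zero] at this
  -- the edge function
  set E : ZMod 12 → Sym2 (ZMod 14) := fun i => s(l i, l (i + 1)) with hEdef
  have hE : ∀ i : ZMod 12, E i ∈ w.edges := by
    intro i
    have hi : i.val < 12 := ZMod.val_lt i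
    by_cases h : i.val + 1 < 12
    · have h2 : l (i + 1) = w.getVert (i.val + 1 + 1) := by
        show w.getVert ((i + 1).val + 1) = _
        rw [hsucc i h]
      show s(l i, l (i + 1)) ∈ w.edges
      rw [h2]
      exact mk_getVert_mem_edges w (i.val + 1) (by omega)
    · have h11 : i.val = 11 := by omega
      have hieq : i = 11 := hi11 i h11
      have h1 : l i = v0 := by
        show w.getVert (i.val + 1) = v0
        rw [h11]; exact hgv12
      have h2 : l (i + 1) = w.getVert 1 := by
        show w.getVert ((i + 1).val + 1) = _
        rw [hieq, show (11 + 1 : ZMod 12) = 0 from by decide]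
        rfl
      show s(l i, l (i + 1)) ∈ w.edges
      rw [h1, h2]
      have := mk_getVert_mem_edges w 0 (by omega)
      rwa [SimpleGraph.Walk.getVert_zero] at this
  have h2ne0 : (2 : ZMod 12) ≠ 0 := by decide
  have hplus2 : ∀ i : ZMod 12, i + 2 ≠ i := by
    intro i h
    exact h2ne0 (by linear_combination h)
  have hEinj : Function.Injective E := by
    intro i j hij
    rcases Sym2.eq_iff.mp hij with ⟨h1, h2⟩ | ⟨h1, h2⟩
    · exact hlinj h1
    · have e1 : i = j + 1 := hlinj h1
      have e2 : i + 1 = j := hlinj h2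
      exfalso
      apply hplus2 j
      linear_combination e2 - e1
  have hcard : w.edges.toFinset.card = 12 := by
    rw [List.toFinset_card_of_nodup hcyc.edges_nodup, SimpleGraph.Walk.length_edges, hlen]
  have hseq : w.edges.toFinset = Finset.image E Finset.univ := by
    refine (Finset.eq_of_subset_of_card_le ?_ ?_).symm
    · intro e he
      obtain ⟨i, _, rfl⟩ := Finset.mem_image.mp he
      exact List.mem_toFinset.mpr (hE i)
    · rw [hcard, Finset.card_image_of_injective _ hEinj, Finset.card_univ, ZMod.card]
  -- basic facts about α
  have hαadj : ∀ x y : ZMod 14, heawood.Adj x y → heawood.Adj (α x) (α y) :=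
    fun x y h => α.map_adj_iff.mpr h
  have hαinj : Function.Injective (⇑α) := α.injective
  have hpow4 : ∀ x : ZMod 14, α (α (α (α x))) = x := by
    have h4 : α ^ 4 = 1 := by rw [← hα]; exact pow_orderOf_eq_one α
    intro x
    have hx : (α ^ 4) x = x := by rw [h4]; rfl
    rw [show (4:ℕ) = 3 + 1 from rfl, pow_succ, pow_succ, pow_succ, pow_one] at hx
    exact hx
  have hne2 : ¬ (∀ x : ZMod 14, α (α x) = x) := by
    intro h2
    have hmul : α * α = 1 := RelIso.ext h2
    have hdvd : orderOf α ∣ 2 := orderOf_dvd_iff_pow_eq_one.mpr (by rw [pow_two]; exact hmul)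
    rw [hα] at hdvd
    omega
  -- α maps cycle edges to cycle edges
  have hmapmem : ∀ e ∈ w.edges.toFinset, Sym2.map (⇑α) e ∈ w.edges.toFinset := by
    intro e he
    rw [← himg]
    exact Finset.mem_image_of_mem _ he
  have hstep0 : ∀ i : ZMod 12, ∃ j : ZMod 12,
      (α (l i) = l j ∧ α (l (i+1)) = l (j+1)) ∨
      (α (l i) = l (j+1) ∧ α (l (i+1)) = l j) := by
    intro i
    have hEi : E i ∈ w.edges.toFinset := List.mem_toFinset.mpr (hE i)
    have hmem := hmapmem _ hEi
    rw [hseq] at hmem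
    obtain ⟨j, -, hj⟩ := Finset.mem_image.mp hmem
    refine ⟨j, ?_⟩
    have hj' : s(α (l i), α (l (i+1))) = s(l j, l (j+1)) := by
      exact (Sym2.map_pair_eq (⇑α) (l i) (l (i+1))).symm.trans hj.symm
    rcases Sym2.eq_iff.mp hj' with ⟨h1, h2⟩ | ⟨h1, h2⟩
    · exact Or.inl ⟨h1, h2⟩
    · exact Or.inr ⟨h1, h2⟩
  have hrange : ∀ i, ∃ j, α (l i) = l j := by
    intro i
    obtain ⟨j, hj⟩ := hstep0 i
    rcases hj with ⟨h1, -⟩ | ⟨h1, -⟩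
    · exact ⟨j, h1⟩
    · exact ⟨j + 1, h1⟩
  choose σ hσ using hrange
  have hσstep : ∀ i, σ (i + 1) = σ i + 1 ∨ σ (i + 1) = σ i - 1 := by
    intro i
    obtain ⟨j, hj⟩ := hstep0 i
    rcases hj with ⟨h1, h2⟩ | ⟨h1, h2⟩
    · have e1 : σ i = j := hlinj ((hσ i).symm.trans h1)
      have e2 : σ (i+1) = j + 1 := hlinj ((hσ (i+1)).symm.trans h2)
      left; rw [e1, e2]
    · have e1 : σ i = j + 1 := hlinj ((hσ i).symm.trans h1)
      have e2 : σ (i+1) = j := hlinj ((hσ (i+1)).symm.trans h2)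
      right; rw [e1, e2]; ring
  have hσinj : Function.Injective σ := by
    intro i j h
    have hc := congrArg l h
    rw [← hσ i, ← hσ j] at hc
    exact hlinj (hαinj hc)
  have hpm : ∀ i : ZMod 12, σ (i+1) = σ i + 1 → σ (i+1) = σ i - 1 → False := by
    intro i h1 h2
    exact h2ne0 (by linear_combination h2 - h1)
  have hstepconst : ∀ i : ZMod 12, (σ (i+1+1) = σ (i+1) + 1) ↔ (σ (i+1) = σ i + 1) := by
    intro i
    constructor
    · intro h2
      rcases hσstep i with h1 | h1
      · exact h1
      · exfalso
        have he : σ (i+1+1) = σ i := by rw [h2, h1]; ring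
        exact hplus2 i (by linear_combination hσinj he)
    · intro h1
      rcases hσstep (i+1) with h2 | h2
      · exact h2
      · exfalso
        have he : σ (i+1+1) = σ i := by rw [h2, h1]; ring
        exact hplus2 i (by linear_combination hσinj he)
  have hdichot : (∀ i, σ (i+1) = σ i + 1) ∨ (∀ i, σ (i+1) = σ i - 1) := by
    have hgstep : ∀ i : ZMod 12, σ (i+1+1) - σ (i+1) = σ (i+1) - σ i := by
      intro i
      rcases hσstep i with h1 | h1
      · rw [(hstepconst i).mpr h1, h1]; ring
      · rcases hσstep (i+1) with h2 | h2
        · exact absurd h1 (fun hh => hpm i ((hstepconst i).mp h2) hh)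
        · rw [h2, h1]; ring
    have hconst := stepConst (fun i => σ (i+1) - σ i) hgstep
    rcases hσstep 0 with h0 | h0
    · left
      intro i
      have := hconst i
      rw [h0] at this
      linear_combination this
    · right
      intro i
      have := hconst i
      rw [h0] at this
      linear_combination this
  -- the two vertices off the cycle
  set Rng : Finset (ZMod 14) := Finset.image l Finset.univ with hRdef
  have hRcard : Rng.card = 12 := by
    rw [hRdef, Finset.card_image_of_injective _ hlinj, Finset.card_univ, ZMod.card]
  have hcomplcard : (Finset.univ \ Rng).card = 2 := by
    rw [Finset.card_sdiff_of_subset (Finset.subset_univ _), Finset.card_univ, ZMod.card, hRcard]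
  obtain ⟨u, z, huz, hcompl2⟩ := Finset.card_eq_two.mp hcomplcard
  have hmemRng : ∀ x : ZMod 14, x ∈ Rng ↔ ∃ i, l i = x := by
    intro x
    rw [hRdef]
    simp [Finset.mem_image]
  have hu_not : ∀ i, l i ≠ u := by
    intro i h
    have hmem : u ∈ Finset.univ \ Rng := by rw [hcompl2]; simp
    exact (Finset.mem_sdiff.mp hmem).2 ((hmemRng u).mpr ⟨i, h⟩)
  have hz_not : ∀ i, l i ≠ z := by
    intro i h
    have hmem : z ∈ Finset.univ \ Rng := by rw [hcompl2]; simp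
    exact (Finset.mem_sdiff.mp hmem).2 ((hmemRng z).mpr ⟨i, h⟩)
  have htotal : ∀ x : ZMod 14, (∃ i, l i = x) ∨ x = u ∨ x = z := by
    intro x
    by_cases h : x ∈ Rng
    · exact Or.inl ((hmemRng x).mp h)
    · right
      have hmem : x ∈ Finset.univ \ Rng := Finset.mem_sdiff.mpr ⟨Finset.mem_univ x, h⟩
      rw [hcompl2] at hmem
      simpa using hmem
  have hαRng_im : Finset.image (⇑α) Rng = Rng := by
    apply Finset.eq_of_subset_of_card_le
    · intro y hy
      obtain ⟨x, hx, rfl⟩ := Finset.mem_image.mp hy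
      obtain ⟨i, rfl⟩ := (hmemRng x).mp hx
      exact (hmemRng _).mpr ⟨σ i, (hσ i).symm⟩
    · rw [Finset.card_image_of_injective _ hαinj]
  have hαoff : ∀ x : ZMod 14, (∀ i, l i ≠ x) → α x = u ∨ α x = z := by
    intro x hx
    have hnot : α x ∉ Rng := by
      intro h
      rw [← hαRng_im] at h
      obtain ⟨y, hy, hye⟩ := Finset.mem_image.mp h
      obtain ⟨i, rfl⟩ := (hmemRng y).mp hy
      exact hx i (hαinj hye)
    rcases htotal (α x) with ⟨i, hi⟩ | h | h
    · exact absurd ((hmemRng _).mpr ⟨i, hi⟩) hnot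
    · exact Or.inl h
    · exact Or.inr h
  have hαu : α u = u ∨ α u = z := hαoff u hu_not
  have hαz : α z = u ∨ α z = z := hαoff z hz_not
  -- parity along the cycle (bipartiteness)
  have hpar : ∀ a b : ZMod 12, heawood.Adj (l a) (l b) →
      (ZMod.castHom (by norm_num : (2:ℕ) ∣ 12) (ZMod 2)) (b - a) ≠ 0 := by
    have hstep' : ∀ i : ZMod 12,
        ((l (i+1)).val : ZMod 2) = ((l i).val : ZMod 2) + 1 := by
      intro i
      have hne := heawood_parity _ _ (hadj i)
      have hflip : ∀ x y : ZMod 2, x ≠ y → y = x + 1 := by decide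
      exact hflip _ _ hne
    have hcast1 : (ZMod.castHom (by norm_num : (2:ℕ) ∣ 12) (ZMod 2)) 1 = 1 := map_one _
    have hconst := stepConst
      (fun i => ((l i).val : ZMod 2) - (ZMod.castHom (by norm_num : (2:ℕ) ∣ 12) (ZMod 2)) i)
      (by
        intro i
        rw [hstep', map_add, hcast1]
        ring)
    intro a b hab h0
    apply heawood_parity _ _ hab
    have ha := hconst a
    have hb := hconst b
    have hsub : (ZMod.castHom (by norm_num : (2:ℕ) ∣ 12) (ZMod 2)) b
        = (ZMod.castHom (by norm_num : (2:ℕ) ∣ 12) (ZMod 2)) a := by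
      have := map_sub (ZMod.castHom (by norm_num : (2:ℕ) ∣ 12) (ZMod 2)) b a
      rw [h0] at this
      linear_combination -this
    linear_combination ha - hb - hsub
  -- helper lemmas for index arithmetic on the cycle
  have hlneq : ∀ (i a b : ZMod 12), a ≠ b → l (i + a) = l (i + b) → False := by
    intro i a b hab h
    exact hab (by linear_combination hlinj h)
  have hlneq0 : ∀ (i b : ZMod 12), b ≠ 0 → l (i + b) = l i → False := by
    intro i b hb h
    exact hb (by linear_combination hlinj h)
  have hadj2 : ∀ (i a b : ZMod 12), b = a + 1 → heawood.Adj (l (i + a)) (l (i + b)) := by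
    intro i a b hb
    subst hb
    have := hadj (i + a)
    rwa [add_assoc] at this
  have hnbr : ∀ x : ZMod 14, ∃ i, heawood.Adj x (l i) := by
    intro x
    obtain ⟨a, b, c', ha, hb, hc', hab, hac, hbc⟩ := heawood_three x
    obtain ⟨h1, h2⟩ | ⟨h1, h2⟩ | ⟨h1, h2⟩ := pick3 (p := u) (q := z) hab hac hbc
    · rcases htotal a with ⟨i, rfl⟩ | rfl | rfl
      · exact ⟨i, ha⟩
      · exact absurd rfl h1
      · exact absurd rfl h2
    · rcases htotal b with ⟨i, rfl⟩ | rfl | rfl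
      · exact ⟨i, hb⟩
      · exact absurd rfl h1
      · exact absurd rfl h2
    · rcases htotal c' with ⟨i, rfl⟩ | rfl | rfl
      · exact ⟨i, hc'⟩
      · exact absurd rfl h1
      · exact absurd rfl h2
  -- σ squared = identity kills α (order 4)
  have hα2id : (∀ i : ZMod 12, σ (σ i) = i) → False := by
    intro hσ2
    apply hne2
    intro x
    rcases htotal x with ⟨i, rfl⟩ | rfl | rfl
    · rw [hσ i, hσ (σ i), hσ2]
    · rcases hαu with h | h
      · rw [h, h]
      · rcases hαz with h' | h'
        · rw [h, h']
        · exact absurd (hαinj (h.trans h'.symm)) huz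
    · rcases hαz with h | h
      · rcases hαu with h' | h'
        · exact absurd (hαinj (h.trans h'.symm)) (Ne.symm huz)
        · rw [h, h']
      · rw [h, h]
  rcases hdichot with hrot | href
  swap
  · -- reflection case: σ² = id
    have hlin : ∀ i, σ i = σ 0 - i := by
      have hcst := stepConst (fun i => σ i + i) (fun i => by rw [href i]; ring)
      intro i
      have h := hcst i
      linear_combination h
    exact hα2id (fun i => by rw [hlin (σ i), hlin i]; ring)
  -- rotation case: σ i = i + c
  have hlin : ∀ i, σ i = i + σ 0 := by
    have hcst := stepConst (fun i => σ i - i) (fun i => by rw [hrot i]; ring)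
    intro i
    have h := hcst i
    linear_combination h
  obtain ⟨c, hkey, hclin⟩ : ∃ c : ZMod 12, (∀ i, α (l i) = l (i + c)) ∧ (∀ i, σ i = i + c) :=
    ⟨σ 0, fun i => by rw [hσ i, hlin i], hlin⟩
  have h4c : c + c + c + c = 0 := by
    have h1 : α (α (α (α (l 0)))) = l (0 + c + c + c + c) := by
      rw [hkey 0, hkey (0 + c), hkey (0 + c + c), hkey (0 + c + c + c)]
    rw [hpow4 (l 0)] at h1
    have h2 := hlinj h1
    linear_combination - h2
  have hid2 : c + c = 0 → False := by
    intro hcc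
    apply hα2id
    intro i
    rw [hclin (σ i), hclin i]
    linear_combination hcc
  have main : (c = 3 ∨ c = 9) → False := by
    intro hc39
    have h2c : c + c = 6 := by
      rcases hc39 with rfl | rfl
      · decide
      · decide
    rcases hαu with hαuu | hαuz
    · -- α fixes u : u gets four distinct neighbours on the cycle
      obtain ⟨i0, hu0⟩ := hnbr u
      have hCuc : ∀ i, heawood.Adj u (l i) → heawood.Adj u (l (i + c)) := by
        intro i hi
        have h := hαadj _ _ hi
        rwa [hαuu, hkey i] at h
      have h1 := hCuc i0 hu0
      have h2 := hCuc _ h1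
      have h3 := hCuc _ h2
      have hA369 : heawood.Adj u (l (i0 + 3)) ∧ heawood.Adj u (l (i0 + 6)) ∧
          heawood.Adj u (l (i0 + 9)) := by
        rcases hc39 with rfl | rfl
        · refine ⟨h1, ?_, ?_⟩
          · rwa [show i0 + 3 + 3 = i0 + 6 from by ring] at h2
          · rwa [show i0 + 3 + 3 + 3 = i0 + 9 from by ring] at h3
        · refine ⟨?_, ?_, h1⟩
          · rwa [show i0 + 9 + 9 + 9 = i0 + 3 from by
              linear_combination (by decide : (9 : ZMod 12) + 9 + 9 = 3)] at h3
          · rwa [show i0 + 9 + 9 = i0 + 6 from by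
              linear_combination (by decide : (9 : ZMod 12) + 9 = 6)] at h2
      obtain ⟨hA3, hA6, hA9⟩ := hA369
      have hu0' : heawood.Adj u (l (i0 + 0)) := by rwa [add_zero]
      rcases heawood_deg4 u _ _ _ _ hu0' hA3 hA6 hA9 with h | h | h | h | h | h <;>
        exact hlneq i0 _ _ (by decide) h
    · -- α swaps u and z
      have hαzu : α z = u := by
        rcases hαz with h | h
        · exact h
        · exact absurd (hαinj (hαuz.trans h.symm)) huz
      have hkey2 : ∀ i, α (α (l i)) = l (i + 6) := by
        intro i
        rw [hkey i, hkey (i + c), add_assoc, h2c]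
      have hCu6 : ∀ i, heawood.Adj u (l i) → heawood.Adj u (l (i + 6)) := by
        intro i hi
        have h := hαadj _ _ (hαadj _ _ hi)
        rwa [hαuz, hαzu, hkey2 i] at h
      have hCuv : ∀ i, heawood.Adj u (l i) → heawood.Adj z (l (i + c)) := by
        intro i hi
        have h := hαadj _ _ hi
        rwa [hαuz, hkey i] at h
      obtain ⟨i0, hu0⟩ := hnbr u
      have hu6 : heawood.Adj u (l (i0 + 6)) := hCu6 i0 hu0
      by_cases hAdjuz : heawood.Adj u z
      · -- u ~ z : chord configuration, contradiction with girth 6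
        have hz39 : heawood.Adj z (l (i0 + 3)) ∧ heawood.Adj z (l (i0 + 9)) := by
          have hv1 := hCuv i0 hu0
          have hv2 := hCuv _ hu6
          rcases hc39 with rfl | rfl
          · exact ⟨hv1, by rwa [show i0 + 6 + 3 = i0 + 9 from by ring] at hv2⟩
          · exact ⟨by rwa [show i0 + 6 + 9 = i0 + 3 from by
              linear_combination (by decide : (6 : ZMod 12) + 9 = 3)] at hv2, hv1⟩
        obtain ⟨hz3, hz9⟩ := hz39
        have hu0' : heawood.Adj u (l (i0 + 0)) := by rwa [add_zero]
        have hunbr : ∀ b : ZMod 12, heawood.Adj u (l (i0 + b)) → b = 0 ∨ b = 6 := by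
          intro b hb
          rcases heawood_deg4 u _ _ _ _ hb hu0' hu6 hAdjuz with h | h | h | h | h | h
          · exact Or.inl (by linear_combination hlinj h)
          · exact Or.inr (by linear_combination hlinj h)
          · exact absurd h (hz_not _)
          · exact absurd h (fun hh => hlneq i0 0 6 (by decide) hh)
          · exact absurd h (hz_not _)
          · exact absurd h (hz_not _)
        have hznbr : ∀ b : ZMod 12, heawood.Adj z (l (i0 + b)) → b = 3 ∨ b = 9 := by
          intro b hb
          rcases heawood_deg4 z _ _ _ _ hb hz3 hz9 hAdjuz.symm with h | h | h | h | h | h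
          · exact Or.inl (by linear_combination hlinj h)
          · exact Or.inr (by linear_combination hlinj h)
          · exact absurd h (hu_not _)
          · exact absurd h (fun hh => hlneq i0 3 9 (by decide) hh)
          · exact absurd h (hu_not _)
          · exact absurd h (hu_not _)
        have hthird : ∀ m : ZMod 12, ∃ y, heawood.Adj (l m) y ∧ y ≠ l (m - 1) ∧ y ≠ l (m + 1) := by
          intro m
          obtain ⟨a, b, c', ha, hb, hc', hab, hac, hbc⟩ := heawood_three (l m)
          obtain ⟨h1, h2⟩ | ⟨h1, h2⟩ | ⟨h1, h2⟩ :=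
            pick3 (p := l (m - 1)) (q := l (m + 1)) hab hac hbc
          · exact ⟨a, ha, h1, h2⟩
          · exact ⟨b, hb, h1, h2⟩
          · exact ⟨c', hc', h1, h2⟩
        obtain ⟨y1, hy1, hy1a, hy1b⟩ := hthird (i0 + 1)
        rw [show i0 + 1 - 1 = i0 + 0 from by ring] at hy1a
        rw [show i0 + 1 + 1 = i0 + 2 from by ring] at hy1b
        have hy1u : y1 ≠ u := by
          rintro rfl
          rcases hunbr 1 hy1.symm with h | h <;> exact absurd h (by decide)
        have hy1z : y1 ≠ z := by
          rintro rfl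
          rcases hznbr 1 hy1.symm with h | h <;> exact absurd h (by decide)
        obtain ⟨k, rfl⟩ : ∃ k, l k = y1 := by
          rcases htotal y1 with h | rfl | rfl
          · exact h
          · exact absurd rfl hy1u
          · exact absurd rfl hy1z
        rcases odd_of_cast_ne _ (hpar (i0 + 1) k hy1) with hd | hd | hd | hd | hd | hd
        · exact hy1b (congrArg l (show k = i0 + 2 from by linear_combination hd))
        · -- chord of length 3 : 4-cycle
          rw [show k = i0 + 4 from by linear_combination hd] at hy1
          rcases heawood_no4 _ _ _ _ (hadj2 i0 1 2 (by decide)) (hadj2 i0 2 3 (by decide))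
            (hadj2 i0 3 4 (by decide)) hy1.symm with h | h
          · exact hlneq i0 1 3 (by decide) h
          · exact hlneq i0 2 4 (by decide) h
        · -- chord to the vertex i0+6 adjacent to u : degree 4
          rw [show k = i0 + 6 from by linear_combination hd] at hy1
          rcases heawood_deg4 (l (i0 + 6)) _ _ _ _ (hadj2 i0 5 6 (by decide)).symm
            (hadj2 i0 6 7 (by decide)) hu6.symm hy1.symm with h | h | h | h | h | h
          · exact hlneq i0 5 7 (by decide) h
          · exact absurd h (hu_not _)
          · exact hlneq i0 5 1 (by decide) h
          · exact absurd h (hu_not _)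
          · exact hlneq i0 7 1 (by decide) h
          · exact absurd h.symm (hu_not _)
        · -- good case : chord from i0+1 to i0+8, now investigate i0+2
          rw [show k = i0 + 8 from by linear_combination hd] at hy1
          obtain ⟨y2, hy2, hy2a, hy2b⟩ := hthird (i0 + 2)
          rw [show i0 + 2 - 1 = i0 + 1 from by ring] at hy2a
          rw [show i0 + 2 + 1 = i0 + 3 from by ring] at hy2b
          have hy2u : y2 ≠ u := by
            rintro rfl
            rcases hunbr 2 hy2.symm with h | h <;> exact absurd h (by decide)
          have hy2z : y2 ≠ z := by
            rintro rfl
            rcases hznbr 2 hy2.symm with h | h <;> exact absurd h (by decide)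
          obtain ⟨k2, rfl⟩ : ∃ k2, l k2 = y2 := by
            rcases htotal y2 with h | rfl | rfl
            · exact h
            · exact absurd rfl hy2u
            · exact absurd rfl hy2z
          rcases odd_of_cast_ne _ (hpar (i0 + 2) k2 hy2) with hd2 | hd2 | hd2 | hd2 | hd2 | hd2
          · exact hy2b (congrArg l (show k2 = i0 + 3 from by linear_combination hd2))
          · rw [show k2 = i0 + 5 from by linear_combination hd2] at hy2
            rcases heawood_no4 _ _ _ _ (hadj2 i0 2 3 (by decide)) (hadj2 i0 3 4 (by decide))
              (hadj2 i0 4 5 (by decide)) hy2.symm with h | h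
            · exact hlneq i0 2 4 (by decide) h
            · exact hlneq i0 3 5 (by decide) h
          · -- both chords present : 4-cycle i0+1, i0+2, i0+7, i0+8
            rw [show k2 = i0 + 7 from by linear_combination hd2] at hy2
            rcases heawood_no4 _ _ _ _ (hadj2 i0 1 2 (by decide)) hy2
              (hadj2 i0 7 8 (by decide)) hy1.symm with h | h
            · exact hlneq i0 1 7 (by decide) h
            · exact hlneq i0 2 8 (by decide) h
          · -- chord to the vertex i0+9 adjacent to z : degree 4
            rw [show k2 = i0 + 9 from by linear_combination hd2] at hy2
            rcases heawood_deg4 (l (i0 + 9)) _ _ _ _ (hadj2 i0 8 9 (by decide)).symm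
              (hadj2 i0 9 10 (by decide)) hz9.symm hy2.symm with h | h | h | h | h | h
            · exact hlneq i0 8 10 (by decide) h
            · exact absurd h (hz_not _)
            · exact hlneq i0 8 2 (by decide) h
            · exact absurd h (hz_not _)
            · exact hlneq i0 10 2 (by decide) h
            · exact absurd h.symm (hz_not _)
          · rw [show k2 = i0 + 11 from by linear_combination hd2] at hy2
            rcases heawood_no4 _ _ _ _ (hadj2 i0 11 0 (by decide)) (hadj2 i0 0 1 (by decide))
              (hadj2 i0 1 2 (by decide)) hy2 with h | h
            · exact hlneq i0 11 1 (by decide) h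
            · exact hlneq i0 0 2 (by decide) h
          · exact hy2a (congrArg l (show k2 = i0 + 1 from by linear_combination hd2 + (by decide : (12 : ZMod 12) = 0)))
        · -- chord of length -3 : 4-cycle
          rw [show k = i0 + 10 from by linear_combination hd] at hy1
          rcases heawood_no4 _ _ _ _ (hadj2 i0 10 11 (by decide)) (hadj2 i0 11 0 (by decide))
            (hadj2 i0 0 1 (by decide)) hy1 with h | h
          · exact hlneq i0 10 0 (by decide) h
          · exact hlneq i0 11 1 (by decide) h
        · exact hy1a (congrArg l (show k = i0 + 0 from by linear_combination hd + (by decide : (12 : ZMod 12) = 0)))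
      · -- u not adjacent to z : all three neighbours of u lie on the cycle
        obtain ⟨a, b, c', ha, hb, hc', hab, hac, hbc⟩ := heawood_three u
        have hget : ∀ y : ZMod 14, heawood.Adj u y → ∃ i, l i = y := by
          intro y hy
          rcases htotal y with h | he | he
          · exact h
          · rw [he] at hy
            exact absurd hy (heawood.loopless.irrefl _)
          · rw [he] at hy
            exact absurd hy hAdjuz
        obtain ⟨ia, rfl⟩ := hget a ha
        obtain ⟨ib, rfl⟩ := hget b hb
        obtain ⟨ic, rfl⟩ := hget c' hc'
        rcases heawood_deg4 u _ _ _ _ ha hb hc' (hCu6 ia ha) with h | h | h | h | h | h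
        · exact hab h
        · exact hac h
        · exact hlneq0 ia 6 (by decide) h.symm
        · exact hbc h
        · -- l ib = l (ia + 6)
          have hib : ib = ia + 6 := hlinj h
          rcases heawood_deg4 u _ _ _ _ ha hb hc' (hCu6 ic hc') with h2 | h2 | h2 | h2 | h2 | h2
          · exact hab h2
          · exact hac h2
          · have he : ib = ic := by
              rw [hib, hlinj h2]
              linear_combination (by decide : (6 : ZMod 12) + 6 = 0)
            exact hbc (congrArg l he)
          · exact hbc h2
          · have he : ia = ic := by
              have h3 := hlinj h2
              rw [hib] at h3
              linear_combination h3
            exact hac (congrArg l he)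
          · exact hlneq0 ic 6 (by decide) h2.symm
        · -- l ic = l (ia + 6)
          have hic : ic = ia + 6 := hlinj h
          rcases heawood_deg4 u _ _ _ _ ha hb hc' (hCu6 ib hb) with h2 | h2 | h2 | h2 | h2 | h2
          · exact hab h2
          · exact hac h2
          · have he : ic = ib := by
              rw [hic, hlinj h2]
              linear_combination (by decide : (6 : ZMod 12) + 6 = 0)
            exact hbc (congrArg l he).symm
          · exact hbc h2
          · exact hlneq0 ib 6 (by decide) h2.symm
          · have he : ia = ib := by
              have h3 := hlinj h2
              rw [hic] at h3
              linear_combination h3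
            exact hab (congrArg l he)
  rcases four_torsion c h4c with rfl | rfl | rfl | rfl
  · exact hid2 (by decide)
  · exact main (Or.inl rfl)
  · exact hid2 (by decide)
  · exact main (Or.inr rfl)
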